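/- Let o ∈ I, c > 0, C > 0, and let f : I → I be a map such that f restricted to I ∩ [-1/2, o) and f restricted to I ∩ (o, 1/2] are each injective and satisfy |f(u) − f(v)| ≥ c|u − v| for u, v on the same side of o. Then for every integer m ≥ 1 and every N > 0, the Lebesgue measure of the set { x ∈ I : Σ_{i=0}^{m-1} ( −C·log|f^i(x) − o| ) > N } is at most 2 e^{−N/(C m)} · Σ_{i=0}^{m-1} (2/c)^i, where the summand −C·log|f^i(x) − o| is interpreted as +∞ when f^i(x) = o. -/

import Mathlib

open MeasureTheory Set Filter Topology
open scoped ENNReal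

noncomputable section

/-- The interval `I = [-1/2, 1/2] ⊆ ℝ`. -/
def I01 : Set ℝ := Set.Icc (-(1 / 2)) (1 / 2)

lemma pre_bound (o c : ℝ) (hc : 0 < c)
    (f : ℝ → ℝ) (hmaps : Set.MapsTo f I01 I01)
    (hexpL : ∀ u ∈ I01 ∩ Set.Ico (-(1 / 2)) o, ∀ v ∈ I01 ∩ Set.Ico (-(1 / 2)) o,
      c * |u - v| ≤ |f u - f v|)
    (hexpR : ∀ u ∈ I01 ∩ Set.Ioc o (1 / 2), ∀ v ∈ I01 ∩ Set.Ioc o (1 / 2),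
      c * |u - v| ≤ |f u - f v|) :
    ∀ i : ℕ, ∀ a b : ℝ, a ≤ b →
      volume {x ∈ I01 | f^[i] x ∈ Set.Icc a b} ≤ ENNReal.ofReal ((b - a) * (2 / c) ^ i) := by
  intro i
  induction i with
  | zero =>
    intro a b hab
    have : {x ∈ I01 | f^[0] x ∈ Set.Icc a b} ⊆ Set.Icc a b := by
      intro x hx; exact hx.2
    calc volume {x ∈ I01 | f^[0] x ∈ Set.Icc a b} ≤ volume (Set.Icc a b) :=
          measure_mono this
      _ = ENNReal.ofReal (b - a) := Real.volume_Icc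
      _ ≤ _ := by simp
  | succ i ih =>
    intro a b hab
    set ε := (b - a) / c with hε
    have hε0 : 0 ≤ ε := div_nonneg (by linarith) hc.le
    -- branch preimage sets
    set A := (I01 ∩ Set.Ico (-(1 / 2)) o) ∩ f ⁻¹' (Set.Icc a b) with hA
    set B := (I01 ∩ Set.Ioc o (1 / 2)) ∩ f ⁻¹' (Set.Icc a b) with hB
    have hdiff : ∀ u v : ℝ, f u ∈ Set.Icc a b → f v ∈ Set.Icc a b → |f u - f v| ≤ b - a := by
      intro u v hu hv
      rw [abs_sub_le_iff]
      constructor <;> [linarith [hu.1, hu.2, hv.1, hv.2]; linarith [hu.1, hu.2, hv.1, hv.2]]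
    have hAdiam : ∀ u ∈ A, ∀ v ∈ A, |u - v| ≤ ε := by
      intro u hu v hv
      have := hexpL u hu.1 v hv.1
      have h2 := hdiff u v hu.2 hv.2
      rw [hε, le_div_iff₀ hc]
      nlinarith
    have hBdiam : ∀ u ∈ B, ∀ v ∈ B, |u - v| ≤ ε := by
      intro u hu v hv
      have := hexpR u hu.1 v hv.1
      have h2 := hdiff u v hu.2 hv.2
      rw [hε, le_div_iff₀ hc]
      nlinarith
    -- hull intervals
    have hullA : A ⊆ Set.Icc (sInf A) (sInf A + ε) := by
      intro y hy
      have hbdd : BddBelow A := ⟨-(1/2), fun z hz => hz.1.1.1⟩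
      refine ⟨csInf_le hbdd hy, ?_⟩
      have : y - ε ≤ sInf A := by
        apply le_csInf ⟨y, hy⟩
        intro z hz
        have := hAdiam y hy z hz
        have := abs_le.mp this
        linarith [this.1, this.2]
      linarith
    have hullB : B ⊆ Set.Icc (sInf B) (sInf B + ε) := by
      intro y hy
      have hbdd : BddBelow B := ⟨-(1/2), fun z hz => hz.1.1.1⟩
      refine ⟨csInf_le hbdd hy, ?_⟩
      have : y - ε ≤ sInf B := by
        apply le_csInf ⟨y, hy⟩
        intro z hz
        have := hBdiam y hy z hz
        have := abs_le.mp this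
        linarith [(abs_le.mp (hBdiam y hy z hz)).1]
      linarith
    -- inclusion
    have hsub : {x ∈ I01 | f^[i+1] x ∈ Set.Icc a b} ⊆
        {x ∈ I01 | f^[i] x ∈ Set.Icc (sInf A) (sInf A + ε)} ∪
        {x ∈ I01 | f^[i] x ∈ Set.Icc (sInf B) (sInf B + ε)} ∪
        {x ∈ I01 | f^[i] x ∈ Set.Icc o o} := by
      intro x hx
      obtain ⟨hxI, hfx⟩ := hx
      rw [Function.iterate_succ_apply'] at hfx
      set y := f^[i] x with hy
      have hyI : y ∈ I01 := hmaps.iterate i hxI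
      rcases lt_trichotomy y o with h | h | h
      · left; left
        refine ⟨hxI, hullA ⟨⟨hyI, ⟨hyI.1, h⟩⟩, hfx⟩⟩
      · right
        exact ⟨hxI, by rw [← hy, h]; exact Set.mem_Icc.2 ⟨le_refl o, le_refl o⟩⟩
      · left; right
        refine ⟨hxI, hullB ⟨⟨hyI, ⟨h, hyI.2⟩⟩, hfx⟩⟩
    calc volume {x ∈ I01 | f^[i+1] x ∈ Set.Icc a b}
        ≤ volume ({x ∈ I01 | f^[i] x ∈ Set.Icc (sInf A) (sInf A + ε)} ∪
            {x ∈ I01 | f^[i] x ∈ Set.Icc (sInf B) (sInf B + ε)}) +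
          volume {x ∈ I01 | f^[i] x ∈ Set.Icc o o} :=
          le_trans (measure_mono hsub) (measure_union_le _ _)
      _ ≤ (volume {x ∈ I01 | f^[i] x ∈ Set.Icc (sInf A) (sInf A + ε)} +
            volume {x ∈ I01 | f^[i] x ∈ Set.Icc (sInf B) (sInf B + ε)}) +
          volume {x ∈ I01 | f^[i] x ∈ Set.Icc o o} := by
          gcongr; exact measure_union_le _ _
      _ ≤ (ENNReal.ofReal ((sInf A + ε - sInf A) * (2/c)^i) +
            ENNReal.ofReal ((sInf B + ε - sInf B) * (2/c)^i)) +
          ENNReal.ofReal ((o - o) * (2/c)^i) := by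
          exact add_le_add (add_le_add (ih _ _ (by linarith)) (ih _ _ (by linarith)))
            (ih _ _ le_rfl)
      _ = ENNReal.ofReal (ε * (2/c)^i) + ENNReal.ofReal (ε * (2/c)^i) := by
          simp [add_sub_cancel_left]
      _ = ENNReal.ofReal (ε * (2/c)^i + ε * (2/c)^i) := by
          rw [ENNReal.ofReal_add (by positivity) (by positivity)]
      _ ≤ ENNReal.ofReal ((b - a) * (2/c)^(i+1)) := by
          apply ENNReal.ofReal_le_ofReal
          have : ε * (2/c)^i + ε * (2/c)^i = (b - a) * (2/c)^(i+1) := by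
            rw [hε, pow_succ]; ring
          linarith [this.le]


/-- If `f : I → I` is injective and `c`-expanding on each of the two branches
`I ∩ [-1/2, o)` and `I ∩ (o, 1/2]`, then for every `m ≥ 1` and `N > 0` the Lebesgue measure of
the set where `Σ_{i<m} (−C·log|f^i(x) − o|) > N` is at most
`2 e^{−N/(Cm)} Σ_{i<m} (2/c)^i`; terms with `f^i(x) = o` are interpreted as `+∞`. -/
theorem measure_large_birkhoff_log_sum
    (o c C : ℝ) (ho : o ∈ I01) (hc : 0 < c) (hC : 0 < C)
    (f : ℝ → ℝ) (hmaps : Set.MapsTo f I01 I01)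
    (hinjL : Set.InjOn f (I01 ∩ Set.Ico (-(1 / 2)) o))
    (hexpL : ∀ u ∈ I01 ∩ Set.Ico (-(1 / 2)) o, ∀ v ∈ I01 ∩ Set.Ico (-(1 / 2)) o,
      c * |u - v| ≤ |f u - f v|)
    (hinjR : Set.InjOn f (I01 ∩ Set.Ioc o (1 / 2)))
    (hexpR : ∀ u ∈ I01 ∩ Set.Ioc o (1 / 2), ∀ v ∈ I01 ∩ Set.Ioc o (1 / 2),
      c * |u - v| ≤ |f u - f v|)
    (m : ℕ) (hm : 1 ≤ m) (N : ℝ) (hN : 0 < N) :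
    volume {x ∈ I01 |
        ENNReal.ofReal N < ∑ i ∈ Finset.range m,
          (if f^[i] x = o then (⊤ : ℝ≥0∞)
            else ENNReal.ofReal (-C * Real.log |f^[i] x - o|))} ≤
      ENNReal.ofReal (2 * Real.exp (-N / (C * m)) * ∑ i ∈ Finset.range m, (2 / c) ^ i) := by

  set ε := Real.exp (-N / (C * m)) with hεdef
  have hεpos : 0 < ε := Real.exp_pos _
  have hm' : (0:ℝ) < m := by exact_mod_cast hm
  set S := fun i : ℕ => {x ∈ I01 | f^[i] x ∈ Set.Icc (o - ε) (o + ε)} with hS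
  have key : {x ∈ I01 |
        ENNReal.ofReal N < ∑ i ∈ Finset.range m,
          (if f^[i] x = o then (⊤ : ℝ≥0∞)
            else ENNReal.ofReal (-C * Real.log |f^[i] x - o|))} ⊆
      ⋃ i ∈ Finset.range m, S i := by
    intro x hx
    obtain ⟨hxI, hlt⟩ := hx
    have hex : ∃ i ∈ Finset.range m, ENNReal.ofReal (N / m) <
        (if f^[i] x = o then (⊤ : ℝ≥0∞)
          else ENNReal.ofReal (-C * Real.log |f^[i] x - o|)) := by
      by_contra h
      push_neg at h
      have hsum := Finset.sum_le_sum h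
      rw [Finset.sum_const, Finset.card_range] at hsum
      have heq : m • ENNReal.ofReal (N / m) = ENNReal.ofReal N := by
        rw [nsmul_eq_mul, ← ENNReal.ofReal_natCast m,
          ← ENNReal.ofReal_mul (Nat.cast_nonneg m)]
        congr 1
        field_simp
      rw [heq] at hsum
      exact absurd (hlt.trans_le hsum) (lt_irrefl _)
    obtain ⟨i, him, hi⟩ := hex
    refine Set.mem_biUnion him ⟨hxI, ?_⟩
    have habs : |f^[i] x - o| ≤ ε := by
      by_cases hfo : f^[i] x = o
      · simp [hfo, hεpos.le]
      · rw [if_neg hfo] at hi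
        have hr : 0 < |f^[i] x - o| := abs_pos.mpr (sub_ne_zero.mpr hfo)
        have h1 : N / m < -C * Real.log |f^[i] x - o| :=
          (ENNReal.ofReal_lt_ofReal_iff_of_nonneg
            (div_nonneg hN.le (Nat.cast_nonneg m))).mp hi
        have hCm : (0:ℝ) < C * m := by positivity
        have h2 : Real.log |f^[i] x - o| < -N / (C * m) := by
          rw [div_lt_iff₀ hm'] at h1
          rw [neg_div, lt_neg, div_lt_iff₀ hCm]
          nlinarith
        have h3 := Real.exp_lt_exp.mpr h2
        rw [Real.exp_log hr] at h3
        exact h3.le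
    have := abs_le.mp habs
    exact ⟨by linarith [this.1], by linarith [this.2]⟩
  calc volume {x ∈ I01 |
        ENNReal.ofReal N < ∑ i ∈ Finset.range m,
          (if f^[i] x = o then (⊤ : ℝ≥0∞)
            else ENNReal.ofReal (-C * Real.log |f^[i] x - o|))}
      ≤ volume (⋃ i ∈ Finset.range m, S i) := measure_mono key
    _ ≤ ∑ i ∈ Finset.range m, volume (S i) := measure_biUnion_finset_le _ _
    _ ≤ ∑ i ∈ Finset.range m, ENNReal.ofReal ((o + ε - (o - ε)) * (2 / c) ^ i) := by
        refine Finset.sum_le_sum fun i _ => ?_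
        exact pre_bound o c hc f hmaps hexpL hexpR i (o - ε) (o + ε) (by linarith)
    _ = ENNReal.ofReal (∑ i ∈ Finset.range m, (o + ε - (o - ε)) * (2 / c) ^ i) := by
        rw [ENNReal.ofReal_sum_of_nonneg]
        intro i _
        have h4 : o + ε - (o - ε) = 2 * ε := by ring
        rw [h4]
        positivity
    _ = ENNReal.ofReal (2 * Real.exp (-N / (C * m)) * ∑ i ∈ Finset.range m, (2 / c) ^ i) := by
        congr 1
        rw [Finset.mul_sum]
        refine Finset.sum_congr rfl fun i _ => ?_
        have h4 : o + ε - (o - ε) = 2 * ε := by ring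
        rw [h4, hεdef]
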